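/- Let k ≥ 1 be an integer. In the polynomial ring ℝ[X,Y], the polynomial (X^{2k} + Y^{2k})/2 − ((X+Y)/2)^{2k} is a sum of squares of polynomials. -/

import Mathlib

open MvPolynomial

lemma key_sum {R : Type*} [CommRing R] (s d : R) (k : ℕ) :
    (s + d)^(2*k) + (s - d)^(2*k)
      = ∑ i ∈ Finset.range (k+1),
          (2:R) * s^(2*i) * d^(2*k - 2*i) * (Nat.choose (2*k) (2*i) : R) := by
  rw [add_pow, sub_eq_add_neg, add_pow, ← Finset.sum_add_distrib]
  have step : ∀ j ∈ Finset.range (2*k+1),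
      s^j * d^(2*k-j) * (Nat.choose (2*k) j : R)
        + s^j * (-d)^(2*k-j) * (Nat.choose (2*k) j : R)
      = if Even j then (2:R) * s^j * d^(2*k-j) * (Nat.choose (2*k) j : R) else 0 := by
    intro j hj
    simp only [Finset.mem_range] at hj
    by_cases hje : Even j
    · have he : Even (2*k - j) := by
        rw [Nat.even_sub (by omega)]
        simp [hje, Nat.even_mul]
      rw [he.neg_pow, if_pos hje]; ring
    · have ho : Odd (2*k - j) := by
        rw [Nat.odd_sub (by omega)]
        simp [Nat.even_mul, Nat.odd_iff, Nat.even_iff] at *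
        omega
      rw [ho.neg_pow, if_neg hje]; ring
  rw [Finset.sum_congr rfl step, ← Finset.sum_filter]
  have himg : (Finset.range (2*k+1)).filter (fun j => Even j)
      = (Finset.range (k+1)).image (fun i => 2*i) := by
    ext j
    simp only [Finset.mem_filter, Finset.mem_range, Finset.mem_image, Nat.even_iff]
    constructor
    · rintro ⟨hj, hm⟩; exact ⟨j/2, by omega, by omega⟩
    · rintro ⟨i, hi, rfl⟩; omega
  rw [himg, Finset.sum_image (by intro a _ b _ h; have h' : 2*a = 2*b := h; omega)]

theorem stmt_15 (k : ℕ) (hk : 1 ≤ k) :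
    ∃ (m : ℕ) (q : Fin m → MvPolynomial (Fin 2) ℝ),
      C (1/2 : ℝ) * ((X 0)^(2*k) + (X 1)^(2*k))
        - (C (1/2 : ℝ) * (X 0 + X 1))^(2*k)
      = ∑ j, (q j)^2 := by
  set s : MvPolynomial (Fin 2) ℝ := C (1/2:ℝ) * (X 0 + X 1) with hs
  set d : MvPolynomial (Fin 2) ℝ := C (1/2:ℝ) * (X 0 - X 1) with hd
  have h2 : (C (1/2:ℝ) : MvPolynomial (Fin 2) ℝ) + C (1/2) = 1 := by
    rw [← C_add]; norm_num
  have hX0 : (X 0 : MvPolynomial (Fin 2) ℝ) = s + d := by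
    rw [hs, hd]; linear_combination -(X (0:Fin 2) : MvPolynomial (Fin 2) ℝ) * h2
  have hX1 : (X 1 : MvPolynomial (Fin 2) ℝ) = s - d := by
    rw [hs, hd]; linear_combination -(X (1:Fin 2) : MvPolynomial (Fin 2) ℝ) * h2
  have h12 : (C (1/2:ℝ) : MvPolynomial (Fin 2) ℝ) * 2 = 1 := by
    rw [← map_ofNat (C : ℝ →+* MvPolynomial (Fin 2) ℝ) 2, ← C_mul]; norm_num
  refine ⟨k, fun i => C (Real.sqrt (Nat.choose (2*k) (2*(i:ℕ)))) * (s^(i:ℕ) * d^(k-(i:ℕ))), ?_⟩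
  have hq : ∀ i : Fin k,
      (C (Real.sqrt (Nat.choose (2*k) (2*(i:ℕ)))) * (s^(i:ℕ) * d^(k-(i:ℕ))))^2
      = C ((Nat.choose (2*k) (2*(i:ℕ)) : ℝ)) * (s^(i:ℕ) * d^(k-(i:ℕ)))^2 := by
    intro i
    rw [mul_pow, ← C_pow, Real.sq_sqrt (by positivity)]
  rw [Finset.sum_congr rfl (fun i _ => hq i), hX0, hX1]
  rw [key_sum, Finset.mul_sum, Finset.sum_range_succ]
  have hlast : C (1/2:ℝ) * ((2:MvPolynomial (Fin 2) ℝ) * s^(2*k) * d^(2*k - 2*k)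
      * (Nat.choose (2*k) (2*k) : MvPolynomial (Fin 2) ℝ)) = s^(2*k) := by
    simp only [Nat.sub_self, pow_zero, Nat.choose_self, Nat.cast_one, mul_one]
    linear_combination s^(2*k) * h12
  rw [hlast, add_sub_cancel_right,
    Fin.sum_univ_eq_sum_range (fun i => C ((Nat.choose (2*k) (2*i) : ℝ)) * (s^i * d^(k-i))^2) k]
  refine Finset.sum_congr rfl ?_
  intro i hi
  simp only [Finset.mem_range] at hi
  have hsub : 2*k - 2*i = 2*(k-i) := by omega
  rw [hsub, map_natCast (C : ℝ →+* MvPolynomial (Fin 2) ℝ)]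
  have e1 : s^(2*i) = (s^i)^2 := by rw [← pow_mul, Nat.mul_comm]
  have e2 : d^(2*(k-i)) = (d^(k-i))^2 := by rw [← pow_mul, Nat.mul_comm]
  rw [e1, e2]
  linear_combination (((s^i)^2 * (d^(k-i))^2) * (Nat.choose (2*k) (2*i) : MvPolynomial (Fin 2) ℝ)) * h12
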